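/- The weighted adjacency matrix of the seesaw graph S_{ℓ,r} has inertia (1, 1+ℓ+r, 0). -/

import Mathlib

/-- Entry (i,j) of the weighted adjacency matrix of the seesaw graph S_{ℓ,r}
(0-indexed): vertices 0,1 are the two weight-0 vertices joined by an edge;
vertices 2,…,ℓ+1 form the left weight-(-2) path attached to vertex 1;
vertices ℓ+2,…,ℓ+r+1 form the right weight-(-2) path attached to vertex 1.
All edges have weight 1. -/
def seesawEntry (l r i j : ℕ) : ℝ :=
  if i = j then (if i ≤ 1 then 0 else -2)
  else if (i = 0 ∧ j = 1) ∨ (j = 0 ∧ i = 1) then 1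
  else if (i = 1 ∧ j = 2 ∧ 1 ≤ l) ∨ (j = 1 ∧ i = 2 ∧ 1 ≤ l) then 1
  else if (i = 1 ∧ j = l + 2 ∧ 1 ≤ r) ∨ (j = 1 ∧ i = l + 2 ∧ 1 ≤ r) then 1
  else if (j = i + 1 ∧ 2 ≤ i ∧ i + 1 ≤ l + 1) ∨ (i = j + 1 ∧ 2 ≤ j ∧ j + 1 ≤ l + 1) then 1
  else if (j = i + 1 ∧ l + 2 ≤ i ∧ i + 1 ≤ l + r + 1) ∨
      (i = j + 1 ∧ l + 2 ≤ j ∧ j + 1 ≤ l + r + 1) then 1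
  else 0

/-- The weighted adjacency matrix of the seesaw graph S_{ℓ,r}. -/
noncomputable def seesawMatrix (l r : ℕ) : Matrix (Fin (2 + l + r)) (Fin (2 + l + r)) ℝ :=
  fun i j => seesawEntry l r (i : ℕ) (j : ℕ)



namespace Seesaw

theorem EL1 (l r i j : ℕ) (hi : i < 2 + l + r) (hj : j < 2 + l + r) :
    seesawEntry l (r+1) i j = seesawEntry l r i j := by
  unfold seesawEntry
  have c4 : (((i = 1 ∧ j = l + 2 ∧ 1 ≤ r+1) ∨ (j = 1 ∧ i = l + 2 ∧ 1 ≤ r+1))) ↔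
      (((i = 1 ∧ j = l + 2 ∧ 1 ≤ r) ∨ (j = 1 ∧ i = l + 2 ∧ 1 ≤ r))) := by omega
  have c6 : (((j = i + 1 ∧ l + 2 ≤ i ∧ i + 1 ≤ l + (r+1) + 1) ∨
      (i = j + 1 ∧ l + 2 ≤ j ∧ j + 1 ≤ l + (r+1) + 1))) ↔
      (((j = i + 1 ∧ l + 2 ≤ i ∧ i + 1 ≤ l + r + 1) ∨
      (i = j + 1 ∧ l + 2 ≤ j ∧ j + 1 ≤ l + r + 1))) := by omega
  simp only [c4, c6]

theorem EL2 (l r j : ℕ) (hj : j < 2 + l + r) :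
    seesawEntry l (r+1) (2+l+r) j = if j = (if r = 0 then 1 else l+1+r) then 1 else 0 := by
  unfold seesawEntry
  have c1 : ¬(2+l+r = j) := by omega
  have c2 : ¬((2+l+r = 0 ∧ j = 1) ∨ (j = 0 ∧ 2+l+r = 1)) := by omega
  have c3 : ¬((2+l+r = 1 ∧ j = 2 ∧ 1 ≤ l) ∨ (j = 1 ∧ 2+l+r = 2 ∧ 1 ≤ l)) := by omega
  have c4 : ((2+l+r = 1 ∧ j = l + 2 ∧ 1 ≤ r+1) ∨ (j = 1 ∧ 2+l+r = l + 2 ∧ 1 ≤ r+1)) ↔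
      (r = 0 ∧ j = 1) := by omega
  have c5 : ¬((j = (2+l+r) + 1 ∧ 2 ≤ 2+l+r ∧ (2+l+r) + 1 ≤ l + 1) ∨
      (2+l+r = j + 1 ∧ 2 ≤ j ∧ j + 1 ≤ l + 1)) := by omega
  have c6 : ((j = (2+l+r) + 1 ∧ l + 2 ≤ 2+l+r ∧ (2+l+r) + 1 ≤ l + (r+1) + 1) ∨
      (2+l+r = j + 1 ∧ l + 2 ≤ j ∧ j + 1 ≤ l + (r+1) + 1)) ↔ (1 ≤ r ∧ j = l+1+r) := by omega
  simp only [c4, c6]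
  rw [if_neg c1, if_neg c2, if_neg c3, if_neg c5]
  split_ifs <;> first | rfl | omega

theorem EL2t (l r j : ℕ) (hj : j < 2 + l + r) :
    seesawEntry l (r+1) j (2+l+r) = if j = (if r = 0 then 1 else l+1+r) then 1 else 0 := by
  unfold seesawEntry
  have c1 : ¬(j = 2+l+r) := by omega
  have c2 : ¬((j = 0 ∧ 2+l+r = 1) ∨ (2+l+r = 0 ∧ j = 1)) := by omega
  have c3 : ¬((j = 1 ∧ 2+l+r = 2 ∧ 1 ≤ l) ∨ (2+l+r = 1 ∧ j = 2 ∧ 1 ≤ l)) := by omega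
  have c4 : ((j = 1 ∧ 2+l+r = l + 2 ∧ 1 ≤ r+1) ∨ (2+l+r = 1 ∧ j = l + 2 ∧ 1 ≤ r+1)) ↔
      (r = 0 ∧ j = 1) := by omega
  have c5 : ¬((2+l+r = j + 1 ∧ 2 ≤ j ∧ j + 1 ≤ l + 1) ∨
      (j = (2+l+r) + 1 ∧ 2 ≤ 2+l+r ∧ (2+l+r) + 1 ≤ l + 1)) := by omega
  have c6 : ((2+l+r = j + 1 ∧ l + 2 ≤ j ∧ j + 1 ≤ l + (r+1) + 1) ∨
      (j = (2+l+r) + 1 ∧ l + 2 ≤ 2+l+r ∧ (2+l+r) + 1 ≤ l + (r+1) + 1)) ↔ (1 ≤ r ∧ j = l+1+r) := by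
    omega
  simp only [c4, c6]
  rw [if_neg c1, if_neg c2, if_neg c3, if_neg c5]
  split_ifs <;> first | rfl | omega

theorem EL3 (l r : ℕ) : seesawEntry l (r+1) (2+l+r) (2+l+r) = -2 := by
  unfold seesawEntry
  rw [if_pos rfl, if_neg (by omega)]

theorem FL1 (l i j : ℕ) (hi : i < 2 + l) (hj : j < 2 + l) :
    seesawEntry (l+1) 0 i j = seesawEntry l 0 i j := by
  unfold seesawEntry
  have c3 : ((i = 1 ∧ j = 2 ∧ 1 ≤ l+1) ∨ (j = 1 ∧ i = 2 ∧ 1 ≤ l+1)) ↔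
      ((i = 1 ∧ j = 2 ∧ 1 ≤ l) ∨ (j = 1 ∧ i = 2 ∧ 1 ≤ l)) := by omega
  have c4 : ((i = 1 ∧ j = (l+1) + 2 ∧ 1 ≤ 0) ∨ (j = 1 ∧ i = (l+1) + 2 ∧ 1 ≤ 0)) ↔
      ((i = 1 ∧ j = l + 2 ∧ 1 ≤ 0) ∨ (j = 1 ∧ i = l + 2 ∧ 1 ≤ 0)) := by omega
  have c5 : ((j = i + 1 ∧ 2 ≤ i ∧ i + 1 ≤ (l+1) + 1) ∨ (i = j + 1 ∧ 2 ≤ j ∧ j + 1 ≤ (l+1) + 1)) ↔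
      ((j = i + 1 ∧ 2 ≤ i ∧ i + 1 ≤ l + 1) ∨ (i = j + 1 ∧ 2 ≤ j ∧ j + 1 ≤ l + 1)) := by omega
  have c6 : ((j = i + 1 ∧ (l+1) + 2 ≤ i ∧ i + 1 ≤ (l+1) + 0 + 1) ∨
      (i = j + 1 ∧ (l+1) + 2 ≤ j ∧ j + 1 ≤ (l+1) + 0 + 1)) ↔
      ((j = i + 1 ∧ l + 2 ≤ i ∧ i + 1 ≤ l + 0 + 1) ∨
      (i = j + 1 ∧ l + 2 ≤ j ∧ j + 1 ≤ l + 0 + 1)) := by omega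
  simp only [c3, c4, c5, c6]

theorem FL2 (l j : ℕ) (hj : j < 2 + l) :
    seesawEntry (l+1) 0 (2+l) j = if j = (if l = 0 then 1 else l+1) then 1 else 0 := by
  unfold seesawEntry
  have c1 : ¬(2+l = j) := by omega
  have c2 : ¬((2+l = 0 ∧ j = 1) ∨ (j = 0 ∧ 2+l = 1)) := by omega
  have c3 : ((2+l = 1 ∧ j = 2 ∧ 1 ≤ l+1) ∨ (j = 1 ∧ 2+l = 2 ∧ 1 ≤ l+1)) ↔ (l = 0 ∧ j = 1) := by
    omega
  have c4 : ¬((2+l = 1 ∧ j = (l+1) + 2 ∧ 1 ≤ 0) ∨ (j = 1 ∧ 2+l = (l+1) + 2 ∧ 1 ≤ 0)) := by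
    omega
  have c5 : ((j = (2+l) + 1 ∧ 2 ≤ 2+l ∧ (2+l) + 1 ≤ (l+1) + 1) ∨
      (2+l = j + 1 ∧ 2 ≤ j ∧ j + 1 ≤ (l+1) + 1)) ↔ (1 ≤ l ∧ j = l+1) := by omega
  have c6 : ¬((j = (2+l) + 1 ∧ (l+1) + 2 ≤ 2+l ∧ (2+l) + 1 ≤ (l+1) + 0 + 1) ∨
      (2+l = j + 1 ∧ (l+1) + 2 ≤ j ∧ j + 1 ≤ (l+1) + 0 + 1)) := by omega
  simp only [c3, c5]
  rw [if_neg c1, if_neg c2, if_neg c4, if_neg c6]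
  split_ifs <;> first | rfl | omega

theorem FL2t (l j : ℕ) (hj : j < 2 + l) :
    seesawEntry (l+1) 0 j (2+l) = if j = (if l = 0 then 1 else l+1) then 1 else 0 := by
  unfold seesawEntry
  have c1 : ¬(j = 2+l) := by omega
  have c2 : ¬((j = 0 ∧ 2+l = 1) ∨ (2+l = 0 ∧ j = 1)) := by omega
  have c3 : ((j = 1 ∧ 2+l = 2 ∧ 1 ≤ l+1) ∨ (2+l = 1 ∧ j = 2 ∧ 1 ≤ l+1)) ↔ (l = 0 ∧ j = 1) := by
    omega
  have c4 : ¬((j = 1 ∧ 2+l = (l+1) + 2 ∧ 1 ≤ 0) ∨ (2+l = 1 ∧ j = (l+1) + 2 ∧ 1 ≤ 0)) := by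
    omega
  have c5 : ((2+l = j + 1 ∧ 2 ≤ j ∧ j + 1 ≤ (l+1) + 1) ∨
      (j = (2+l) + 1 ∧ 2 ≤ 2+l ∧ (2+l) + 1 ≤ (l+1) + 1)) ↔ (1 ≤ l ∧ j = l+1) := by omega
  have c6 : ¬((2+l = j + 1 ∧ (l+1) + 2 ≤ j ∧ j + 1 ≤ (l+1) + 0 + 1) ∨
      (j = (2+l) + 1 ∧ (l+1) + 2 ≤ 2+l ∧ (2+l) + 1 ≤ (l+1) + 0 + 1)) := by omega
  simp only [c3, c5]
  rw [if_neg c1, if_neg c2, if_neg c4, if_neg c6]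
  split_ifs <;> first | rfl | omega

theorem FL3 (l : ℕ) : seesawEntry (l+1) 0 (2+l) (2+l) = -2 := by
  unfold seesawEntry
  rw [if_pos rfl, if_neg (by omega)]

end Seesaw

noncomputable def Ssum (l r : ℕ) (x : ℕ → ℝ) : ℝ :=
  ∑ i ∈ Finset.range (2+l+r), ∑ j ∈ Finset.range (2+l+r), x i * seesawEntry l r i j * x j

namespace Seesaw

theorem step_r (l r : ℕ) (x : ℕ → ℝ) :
    Ssum l (r+1) x = Ssum l r x +
      (-2 * x (2+l+r) * x (2+l+r) + 2 * x (2+l+r) * x (if r = 0 then 1 else l+1+r)) := by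
  have h : 2 + l + (r+1) = (2+l+r) + 1 := by omega
  rw [Ssum, h]
  rw [Finset.sum_range_succ]
  have hsplit : ∀ i : ℕ, (∑ j ∈ Finset.range ((2+l+r)+1), x i * seesawEntry l (r+1) i j * x j)
      = (∑ j ∈ Finset.range (2+l+r), x i * seesawEntry l (r+1) i j * x j)
        + x i * seesawEntry l (r+1) i (2+l+r) * x (2+l+r) :=
    fun i => Finset.sum_range_succ _ (2+l+r)
  simp only [hsplit]
  rw [Finset.sum_add_distrib]
  have t1 : (∑ i ∈ Finset.range (2+l+r), ∑ j ∈ Finset.range (2+l+r),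
      x i * seesawEntry l (r+1) i j * x j) = Ssum l r x := by
    rw [Ssum]
    refine Finset.sum_congr rfl fun i hi => Finset.sum_congr rfl fun j hj => ?_
    rw [EL1 l r i j (Finset.mem_range.mp hi) (Finset.mem_range.mp hj)]
  have t2 : (∑ i ∈ Finset.range (2+l+r), x i * seesawEntry l (r+1) i (2+l+r) * x (2+l+r))
      = x (if r = 0 then 1 else l+1+r) * x (2+l+r) := by
    have : ∀ i ∈ Finset.range (2+l+r), x i * seesawEntry l (r+1) i (2+l+r) * x (2+l+r)
        = if i = (if r = 0 then 1 else l+1+r) then x i * x (2+l+r) else 0 := by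
      intro i hi
      rw [EL2t l r i (Finset.mem_range.mp hi)]
      split_ifs <;> ring
    rw [Finset.sum_congr rfl this, Finset.sum_ite_eq']
    rw [if_pos]
    rw [Finset.mem_range]
    split_ifs <;> omega
  have t3 : (∑ j ∈ Finset.range (2+l+r), x (2+l+r) * seesawEntry l (r+1) (2+l+r) j * x j)
      = x (2+l+r) * x (if r = 0 then 1 else l+1+r) := by
    have : ∀ j ∈ Finset.range (2+l+r), x (2+l+r) * seesawEntry l (r+1) (2+l+r) j * x j
        = if j = (if r = 0 then 1 else l+1+r) then x (2+l+r) * x j else 0 := by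
      intro j hj
      rw [EL2 l r j (Finset.mem_range.mp hj)]
      split_ifs <;> ring
    rw [Finset.sum_congr rfl this, Finset.sum_ite_eq']
    rw [if_pos]
    rw [Finset.mem_range]
    split_ifs <;> omega
  rw [t1, t2, t3, EL3]
  ring

theorem step_l (l : ℕ) (x : ℕ → ℝ) :
    Ssum (l+1) 0 x = Ssum l 0 x +
      (-2 * x (2+l) * x (2+l) + 2 * x (2+l) * x (if l = 0 then 1 else l+1)) := by
  have h : 2 + (l+1) + 0 = (2+l) + 1 := by omega
  rw [Ssum, h]
  rw [Finset.sum_range_succ]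
  have hsplit : ∀ i : ℕ, (∑ j ∈ Finset.range ((2+l)+1), x i * seesawEntry (l+1) 0 i j * x j)
      = (∑ j ∈ Finset.range (2+l), x i * seesawEntry (l+1) 0 i j * x j)
        + x i * seesawEntry (l+1) 0 i (2+l) * x (2+l) :=
    fun i => Finset.sum_range_succ _ (2+l)
  simp only [hsplit]
  rw [Finset.sum_add_distrib]
  have t1 : (∑ i ∈ Finset.range (2+l), ∑ j ∈ Finset.range (2+l),
      x i * seesawEntry (l+1) 0 i j * x j) = Ssum l 0 x := by
    rw [Ssum]
    refine Finset.sum_congr rfl fun i hi => Finset.sum_congr rfl fun j hj => ?_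
    rw [FL1 l i j (Finset.mem_range.mp hi) (Finset.mem_range.mp hj)]
  have t2 : (∑ i ∈ Finset.range (2+l), x i * seesawEntry (l+1) 0 i (2+l) * x (2+l))
      = x (if l = 0 then 1 else l+1) * x (2+l) := by
    have : ∀ i ∈ Finset.range (2+l), x i * seesawEntry (l+1) 0 i (2+l) * x (2+l)
        = if i = (if l = 0 then 1 else l+1) then x i * x (2+l) else 0 := by
      intro i hi
      rw [FL2t l i (Finset.mem_range.mp hi)]
      split_ifs <;> ring
    rw [Finset.sum_congr rfl this, Finset.sum_ite_eq']
    rw [if_pos]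
    rw [Finset.mem_range]
    split_ifs <;> omega
  have t3 : (∑ j ∈ Finset.range (2+l), x (2+l) * seesawEntry (l+1) 0 (2+l) j * x j)
      = x (2+l) * x (if l = 0 then 1 else l+1) := by
    have : ∀ j ∈ Finset.range (2+l), x (2+l) * seesawEntry (l+1) 0 (2+l) j * x j
        = if j = (if l = 0 then 1 else l+1) then x (2+l) * x j else 0 := by
      intro j hj
      rw [FL2 l j (Finset.mem_range.mp hj)]
      split_ifs <;> ring
    rw [Finset.sum_congr rfl this, Finset.sum_ite_eq']
    rw [if_pos]
    rw [Finset.mem_range]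
    split_ifs <;> omega
  rw [t1, t2, t3, FL3]
  ring

theorem base00 (x : ℕ → ℝ) : Ssum 0 0 x = 2 * x 0 * x 1 := by
  rw [Ssum]
  norm_num [Finset.sum_range_succ, seesawEntry]
  ring

end Seesaw

noncomputable def pL (x : ℕ → ℝ) : ℕ → ℝ := fun k => if k = 0 then x 1 else x (k+1)
noncomputable def pR (l : ℕ) (x : ℕ → ℝ) : ℕ → ℝ := fun k => if k = 0 then x 1 else x (l+1+k)

noncomputable def RHSval (l r : ℕ) (x : ℕ → ℝ) : ℝ :=
  (1/2)*(x 0 + 2*x 1)^2 - (1/2)*(x 0)^2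
  - (∑ i ∈ Finset.range l, (pL x (i+1) - pL x i)^2) - (pL x l)^2
  - (∑ i ∈ Finset.range r, (pR l x (i+1) - pR l x i)^2) - (pR l x r)^2

namespace Seesaw

theorem closed (l r : ℕ) (x : ℕ → ℝ) : Ssum l r x = RHSval l r x := by
  induction r with
  | zero =>
    induction l with
    | zero =>
      rw [base00, RHSval]
      simp [pL, pR]
      ring
    | succ l ih =>
      rw [step_l, ih, RHSval, RHSval]
      rw [Finset.sum_range_succ]
      have h1 : pL x (l+1) = x (2+l) := by
        rw [pL]
        norm_num
        rw [show l + 1 + 1 = 2 + l by omega]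
      have h2 : pL x l = x (if l = 0 then 1 else l+1) := by
        rw [pL]
        split_ifs with h <;> rfl
      have h3 : ∀ k, pR (l+1) x k = pR l x k ∨ k ≠ 0 := fun k => by
        by_cases h : k = 0
        · left; simp [pR, h]
        · right; exact h
      have h4 : pR (l+1) x 0 = pR l x 0 := by simp [pR]
      rw [h1, h2, h4]
      ring
  | succ r ih =>
    rw [step_r, ih, RHSval, RHSval]
    rw [Finset.sum_range_succ]
    have h1 : pR l x (r+1) = x (2+l+r) := by
      rw [pR]
      norm_num
      rw [show l + 1 + (r + 1) = 2 + l + r by omega]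
    have h2 : pR l x r = x (if r = 0 then 1 else l+1+r) := by
      rw [pR]
      split_ifs with h <;> rfl
    rw [h1, h2]
    ring

end Seesaw

namespace Seesaw

theorem key_zero (l r : ℕ) (x : ℕ → ℝ) (hx : x 0 + 2 * x 1 = 0) :
    Ssum l r x ≤ 0 ∧ (Ssum l r x = 0 → ∀ k, k < 2+l+r → x k = 0) := by
  rw [closed, RHSval]
  have hSL : (0:ℝ) ≤ ∑ i ∈ Finset.range l, (pL x (i+1) - pL x i)^2 :=
    Finset.sum_nonneg fun i _ => sq_nonneg _
  have hSR : (0:ℝ) ≤ ∑ i ∈ Finset.range r, (pR l x (i+1) - pR l x i)^2 :=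
    Finset.sum_nonneg fun i _ => sq_nonneg _
  have hsq : (x 0 + 2*x 1)^2 = 0 := by rw [hx]; ring
  rw [hsq]
  constructor
  · linarith [sq_nonneg (x 0), sq_nonneg (pL x l), sq_nonneg (pR l x r)]
  · intro h0
    have e0sq : (x 0)^2 = 0 := by
      linarith [sq_nonneg (x 0), sq_nonneg (pL x l), sq_nonneg (pR l x r)]
    have e0 : x 0 = 0 := sq_eq_zero_iff.mp e0sq
    have e1 : x 1 = 0 := by linarith
    have eLsq : (pL x l)^2 = 0 := by
      linarith [sq_nonneg (x 0), sq_nonneg (pL x l), sq_nonneg (pR l x r)]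
    have eRsq : (pR l x r)^2 = 0 := by
      linarith [sq_nonneg (x 0), sq_nonneg (pL x l), sq_nonneg (pR l x r)]
    have hSL0 : (∑ i ∈ Finset.range l, (pL x (i+1) - pL x i)^2) = 0 := by
      linarith [sq_nonneg (x 0), sq_nonneg (pL x l), sq_nonneg (pR l x r)]
    have hSR0 : (∑ i ∈ Finset.range r, (pR l x (i+1) - pR l x i)^2) = 0 := by
      linarith [sq_nonneg (x 0), sq_nonneg (pL x l), sq_nonneg (pR l x r)]
    have htermL := (Finset.sum_eq_zero_iff_of_nonneg (fun i _ => sq_nonneg _)).mp hSL0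
    have htermR := (Finset.sum_eq_zero_iff_of_nonneg (fun i _ => sq_nonneg _)).mp hSR0
    have hdiffL : ∀ i, i < l → pL x (i+1) = pL x i := by
      intro i hi
      have h := htermL i (Finset.mem_range.mpr hi)
      have := sq_eq_zero_iff.mp h
      linarith
    have hdiffR : ∀ i, i < r → pR l x (i+1) = pR l x i := by
      intro i hi
      have h := htermR i (Finset.mem_range.mpr hi)
      have := sq_eq_zero_iff.mp h
      linarith
    have hpL : ∀ k, k ≤ l → pL x k = 0 := by
      intro k
      induction k with
      | zero => intro _; show pL x 0 = 0; simp [pL, e1]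
      | succ k ih => intro hk; rw [hdiffL k (by omega)]; exact ih (by omega)
    have hpR : ∀ k, k ≤ r → pR l x k = 0 := by
      intro k
      induction k with
      | zero => intro _; show pR l x 0 = 0; simp [pR, e1]
      | succ k ih => intro hk; rw [hdiffR k (by omega)]; exact ih (by omega)
    intro k hk
    by_cases h0' : k = 0
    · rw [h0']; exact e0
    by_cases h1' : k = 1
    · rw [h1']; exact e1
    by_cases h2' : k ≤ l + 1
    · have h := hpL (k-1) (by omega)
      rw [pL] at h
      rw [if_neg (by omega)] at h
      rw [show k - 1 + 1 = k by omega] at h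
      exact h
    · have h := hpR (k-(l+1)) (by omega)
      rw [pR] at h
      rw [if_neg (by omega)] at h
      rw [show l + 1 + (k - (l+1)) = k by omega] at h
      exact h

noncomputable def vpos : ℕ → ℝ := fun k => if k ≤ 1 then 1 else 0

theorem pos_witness (l r : ℕ) : Ssum l r vpos = 2 := by
  have hpl : ∀ k : ℕ, pL vpos k = if k = 0 then 1 else 0 := by
    intro k
    rw [pL]
    split_ifs with h
    · simp [vpos]
    · rw [vpos]; rw [if_neg (by omega)]
  have hpr : ∀ k : ℕ, pR l vpos k = if k = 0 then 1 else 0 := by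
    intro k
    rw [pR]
    split_ifs with h
    · simp [vpos]
    · rw [vpos]; rw [if_neg (by omega)]
  have hL : ∀ l' : ℕ, (∑ i ∈ Finset.range l', (pL vpos (i+1) - pL vpos i)^2)
      + (pL vpos l')^2 = 1 := by
    intro l'
    induction l' with
    | zero => simp [hpl]
    | succ k ih =>
      rw [Finset.sum_range_succ]
      rw [hpl (k+1)] at *
      rw [if_neg (by omega)]
      rw [hpl k] at *
      split_ifs at * <;> (try rw [if_neg (by omega)] at ih) <;> nlinarith [ih]
  have hR : ∀ r' : ℕ, (∑ i ∈ Finset.range r', (pR l vpos (i+1) - pR l vpos i)^2)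
      + (pR l vpos r')^2 = 1 := by
    intro r'
    induction r' with
    | zero => simp [hpr]
    | succ k ih =>
      rw [Finset.sum_range_succ]
      rw [hpr (k+1)] at *
      rw [if_neg (by omega)]
      rw [hpr k] at *
      split_ifs at * <;> nlinarith [ih]
  have h0 : vpos 0 = 1 := by rw [vpos]; norm_num
  have h1 : vpos 1 = 1 := by rw [vpos]; norm_num
  rw [closed, RHSval, h0, h1]
  linarith [hL l, hR r]

end Seesaw


theorem quad_eig {m : ℕ} (A : Matrix (Fin m) (Fin m) ℝ) (hA : A.IsHermitian) (x : Fin m → ℝ) :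
    dotProduct x (A.mulVec x) =
      ∑ i, hA.eigenvalues i *
        ((Matrix.mulVec (star (hA.eigenvectorUnitary : Matrix (Fin m) (Fin m) ℝ)) x) i)^2 := by
  set U := (hA.eigenvectorUnitary : Matrix (Fin m) (Fin m) ℝ) with hU
  set y := Matrix.mulVec (star U) x with hy
  conv_lhs => rw [hA.spectral_theorem, Unitary.conjStarAlgAut_apply]
  rw [← Matrix.mulVec_mulVec, ← Matrix.mulVec_mulVec]
  rw [Matrix.dotProduct_mulVec x]
  have h1 : Matrix.vecMul x U = y := by
    rw [hy, Matrix.star_eq_conjTranspose, Matrix.conjTranspose_eq_transpose_of_trivial,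
      Matrix.mulVec_transpose]
  rw [h1]
  rw [dotProduct]
  refine Finset.sum_congr rfl fun i _ => ?_
  rw [Matrix.mulVec_diagonal]
  have : (RCLike.ofReal ∘ hA.eigenvalues) i = hA.eigenvalues i := rfl
  rw [this]
  ring


namespace Seesaw

theorem bridge (l r : ℕ) (x : Fin (2+l+r) → ℝ) :
    dotProduct x ((seesawMatrix l r).mulVec x)
      = Ssum l r (fun k => if h : k < 2+l+r then x ⟨k,h⟩ else 0) := by
  set ex : ℕ → ℝ := fun k => if h : k < 2+l+r then x ⟨k,h⟩ else 0 with hex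
  have hx : ∀ i : Fin (2+l+r), x i = ex ↑i := by
    intro i
    rw [hex]
    simp only [Fin.is_lt, dif_pos, Fin.eta]
  rw [dotProduct]
  have key : ∀ i : Fin (2+l+r), x i * (seesawMatrix l r).mulVec x i
      = (fun k : ℕ => ∑ j ∈ Finset.range (2+l+r), ex k * seesawEntry l r k j * ex j) ↑i := by
    intro i
    show x i * (seesawMatrix l r).mulVec x i
      = ∑ j ∈ Finset.range (2+l+r), ex ↑i * seesawEntry l r ↑i j * ex j
    rw [Matrix.mulVec, dotProduct, Finset.mul_sum]
    have h2 : ∀ j : Fin (2+l+r), x i * (seesawMatrix l r i j * x j)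
        = (fun k : ℕ => ex ↑i * seesawEntry l r ↑i k * ex k) ↑j := by
      intro j
      show x i * (seesawMatrix l r i j * x j) = ex ↑i * seesawEntry l r ↑i ↑j * ex ↑j
      rw [← hx i, ← hx j]
      have : seesawMatrix l r i j = seesawEntry l r ↑i ↑j := rfl
      rw [this]
      ring
    calc (∑ j : Fin (2+l+r), x i * (seesawMatrix l r i j * x j))
        = ∑ j : Fin (2+l+r), (fun k : ℕ => ex ↑i * seesawEntry l r ↑i k * ex k) ↑j :=
          by exact Finset.sum_congr rfl (fun j _ => h2 j)
      _ = ∑ j ∈ Finset.range (2+l+r), ex ↑i * seesawEntry l r ↑i j * ex j :=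
          Fin.sum_univ_eq_sum_range (fun k : ℕ => ex ↑i * seesawEntry l r ↑i k * ex k) (2+l+r)
  calc (∑ i : Fin (2+l+r), x i * (seesawMatrix l r).mulVec x i)
      = ∑ i : Fin (2+l+r),
          (fun k : ℕ => ∑ j ∈ Finset.range (2+l+r), ex k * seesawEntry l r k j * ex j) ↑i :=
        by exact Finset.sum_congr rfl (fun i _ => key i)
    _ = ∑ i ∈ Finset.range (2+l+r),
          (fun k : ℕ => ∑ j ∈ Finset.range (2+l+r), ex k * seesawEntry l r k j * ex j) i :=
        Fin.sum_univ_eq_sum_range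
          (fun k : ℕ => ∑ j ∈ Finset.range (2+l+r), ex k * seesawEntry l r k j * ex j) (2+l+r)
    _ = Ssum l r ex := rfl

end Seesaw

/-- the weighted adjacency matrix of the seesaw graph S_{ℓ,r}
has inertia (1, 1+ℓ+r, 0). -/
theorem stmt12 (l r : ℕ) (hH : (seesawMatrix l r).IsHermitian) :
    (Finset.univ.filter fun i => 0 < hH.eigenvalues i).card = 1 ∧
    (Finset.univ.filter fun i => hH.eigenvalues i < 0).card = 1 + l + r ∧
    (Finset.univ.filter fun i => hH.eigenvalues i = 0).card = 0 := by
  classical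
  set m := 2 + l + r with hm
  set lam := hH.eigenvalues with hlam
  set U := (hH.eigenvectorUnitary : Matrix (Fin (2+l+r)) (Fin (2+l+r)) ℝ) with hU
  set P := (Finset.univ.filter fun i => 0 < lam i) with hP
  set N := (Finset.univ.filter fun i => lam i < 0) with hN
  set Z := (Finset.univ.filter fun i => lam i = 0) with hZ
  -- quadratic form identity
  have hquad : ∀ x : Fin (2+l+r) → ℝ,
      Ssum l r (fun k => if h : k < 2+l+r then x ⟨k,h⟩ else 0)
        = ∑ i, lam i * ((Matrix.mulVec (star U) x) i)^2 := by
    intro x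
    rw [← Seesaw.bridge l r x, quad_eig (seesawMatrix l r) hH x]
  -- positive count at least 1
  have hPpos : 1 ≤ P.card := by
    by_contra hc
    push_neg at hc
    interval_cases h : P.card
    · have hPe : P = ∅ := Finset.card_eq_zero.mp h
      have hall : ∀ i, lam i ≤ 0 := by
        intro i
        by_contra hi
        push_neg at hi
        have : i ∈ P := by
          rw [hP]
          simp [hi]
        rw [hPe] at this
        exact absurd this (Finset.notMem_empty i)
      have h2 : Ssum l r (fun k => if h : k < 2+l+r then (fun i : Fin (2+l+r) => Seesaw.vpos ↑i) ⟨k,h⟩ else 0) = 2 := by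
        have hxe : (fun k => if h : k < 2+l+r then (fun i : Fin (2+l+r) => Seesaw.vpos ↑i) ⟨k,h⟩ else 0) = Seesaw.vpos := by
          funext k
          by_cases hk : k < 2+l+r
          · rw [dif_pos hk]
          · rw [dif_neg hk, Seesaw.vpos, if_neg (by omega)]
        rw [hxe, Seesaw.pos_witness]
      have h4 := hquad (fun i : Fin (2+l+r) => Seesaw.vpos ↑i)
      rw [h4] at h2
      have h3 : (∑ i, lam i * ((Matrix.mulVec (star U) (fun i : Fin (2+l+r) => Seesaw.vpos ↑i)) i)^2) ≤ 0 :=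
        Finset.sum_nonpos fun i _ =>
          mul_nonpos_iff.mpr (Or.inr ⟨hall i, sq_nonneg _⟩)
      linarith
  -- negative count at least m - 1
  haveI : NeZero (2+l+r) := ⟨by omega⟩
  have hNneg : m - 1 ≤ N.card := by
    set i0 : Fin (2+l+r) := ⟨0, by omega⟩ with hi0
    set i1 : Fin (2+l+r) := ⟨1, by omega⟩ with hi1
    let f : (Fin (2+l+r) → ℝ) →ₗ[ℝ] ℝ :=
      { toFun := fun x => x i0 + 2 * x i1
        map_add' := by intro a b; simp [Pi.add_apply]; ring
        map_smul' := by intro c a; simp [Pi.smul_apply, smul_eq_mul]; ring }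
    have hfsurj : Function.Surjective f := by
      intro c
      refine ⟨fun i => if i = i0 then c else 0, ?_⟩
      show (if i0 = i0 then c else 0) + 2 * (if i1 = i0 then c else 0) = c
      rw [if_pos rfl, if_neg (by simp [hi0, hi1, Fin.ext_iff])]
      ring
    have hker : Module.finrank ℝ (LinearMap.ker f) = (2+l+r) - 1 := by
      have h1 := LinearMap.finrank_range_add_finrank_ker f
      rw [LinearMap.range_eq_top.mpr hfsurj, finrank_top, Module.finrank_self,
        Module.finrank_fintype_fun_eq_card, Fintype.card_fin] at h1
      omega
    let g : (LinearMap.ker f) →ₗ[ℝ] (↥N → ℝ) :=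
      (LinearMap.funLeft ℝ ℝ (fun i : ↥N => (i : Fin (2+l+r)))) ∘ₗ
        (Matrix.mulVecLin (star U)) ∘ₗ (Submodule.subtype (LinearMap.ker f))
    have hginj : Function.Injective g := by
      rw [← LinearMap.ker_eq_bot]
      rw [Submodule.eq_bot_iff]
      intro x hx
      have hgx : ∀ i : ↥N, (Matrix.mulVec (star U) (x : Fin (2+l+r) → ℝ)) (i : Fin (2+l+r)) = 0 := by
        intro i
        have : g x = 0 := hx
        exact congrFun this i
      have hyneg : ∀ i : Fin (2+l+r), lam i < 0 →
          (Matrix.mulVec (star U) (x : Fin (2+l+r) → ℝ)) i = 0 := by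
        intro i hi
        exact hgx ⟨i, by rw [hN]; simp [hi]⟩
      -- q(x) ≥ 0
      have hq1 : 0 ≤ ∑ i, lam i * ((Matrix.mulVec (star U) (x : Fin (2+l+r) → ℝ)) i)^2 := by
        apply Finset.sum_nonneg
        intro i _
        by_cases hi : lam i < 0
        · rw [hyneg i hi]
          simp
        · push_neg at hi
          exact mul_nonneg hi (sq_nonneg _)
      -- q(x) ≤ 0 via key_zero
      have hxker : (x : Fin (2+l+r) → ℝ) i0 + 2 * (x : Fin (2+l+r) → ℝ) i1 = 0 := x.2
      set ex : ℕ → ℝ := fun k => if h : k < 2+l+r then (x : Fin (2+l+r) → ℝ) ⟨k,h⟩ else 0 with hex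
      have hex0 : ex 0 + 2 * ex 1 = 0 := by
        rw [hex]
        simp only []
        rw [dif_pos (by omega : (0:ℕ) < 2+l+r), dif_pos (by omega : (1:ℕ) < 2+l+r)]
        exact hxker
      have hkz := Seesaw.key_zero l r ex hex0
      have hq2 : Ssum l r ex = ∑ i, lam i * ((Matrix.mulVec (star U) (x : Fin (2+l+r) → ℝ)) i)^2 :=
        hquad (x : Fin (2+l+r) → ℝ)
      have hq0 : Ssum l r ex = 0 := by
        rw [hq2] at hkz ⊢
        exact le_antisymm hkz.1 hq1
      have hzero := (Seesaw.key_zero l r ex hex0).2 hq0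
      have : (x : Fin (2+l+r) → ℝ) = 0 := by
        funext i
        have h := hzero ↑i i.is_lt
        rw [hex] at h
        simp only [Fin.is_lt, dif_pos, Fin.eta] at h
        exact h
      exact Subtype.ext this
    have hle := LinearMap.finrank_le_finrank_of_injective hginj
    rw [hker] at hle
    rw [Module.finrank_fintype_fun_eq_card, Fintype.card_coe] at hle
    omega
  -- partition
  have hsum : P.card + N.card + Z.card = m := by
    have hd1 : Disjoint P N := by
      rw [Finset.disjoint_left]
      intro a haP haN
      rw [hP] at haP
      rw [hN] at haN
      simp at haP haN
      linarith
    have hd2 : Disjoint (P ∪ N) Z := by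
      rw [Finset.disjoint_left]
      intro a ha haZ
      rw [hZ] at haZ
      simp at haZ
      rcases Finset.mem_union.mp ha with h | h
      · rw [hP] at h; simp at h; linarith
      · rw [hN] at h; simp at h; linarith
    have hcover : P ∪ N ∪ Z = Finset.univ := by
      ext a
      simp only [Finset.mem_union, Finset.mem_univ, iff_true]
      rcases lt_trichotomy (lam a) 0 with h | h | h
      · exact Or.inl (Or.inr (by rw [hN]; simp [h]))
      · exact Or.inr (by rw [hZ]; simp [h])
      · exact Or.inl (Or.inl (by rw [hP]; simp [h]))
    have := congrArg Finset.card hcover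
    rw [Finset.card_union_of_disjoint hd2, Finset.card_union_of_disjoint hd1,
      Finset.card_univ, Fintype.card_fin] at this
    omega
  refine ⟨by omega, by omega, by omega⟩
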